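/- Let (G, 𝒫, 𝒯) be an instance of Partitioned Vertex Cover and let H be the Popular Matching instance constructed from it. If M is a popular matching in H, then for every vertex i of G, either {a_i, b_i} ∈ M, or both {a_i, d_i} ∈ M and {b_i, c_i} ∈ M. -/

import Mathlib

open SimpleGraph

universe u

/-- A matching: a set of edges of `G` that are pairwise vertex-disjoint. -/
def IsMatching {W : Type u} (G : SimpleGraph W) (M : Set (Sym2 W)) : Prop :=
  M ⊆ G.edgeSet ∧ ∀ e ∈ M, ∀ e' ∈ M, e ≠ e' → ∀ v : W, v ∈ e → v ∉ e'

/-- `v` is matched by `M`. -/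
def Matched {W : Type u} (M : Set (Sym2 W)) (v : W) : Prop := ∃ w : W, s(v, w) ∈ M

open scoped Classical in
/-- `rank G pref M v = pref v (M(v))`, with the convention `|N(v)|+1` if `v` is unmatched. -/
noncomputable def rank {W : Type u} (G : SimpleGraph W) (pref : W → W → ℕ)
    (M : Set (Sym2 W)) (v : W) : ℕ :=
  if h : ∃ w : W, s(v, w) ∈ M then pref v h.choose else (G.neighborSet v).ncard + 1

/-- The number of vertices preferring `M` over `M'`. -/
noncomputable def vote {W : Type u} (G : SimpleGraph W) (pref : W → W → ℕ)
    (M M' : Set (Sym2 W)) : ℕ :=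
  {v : W | rank G pref M v < rank G pref M' v}.ncard

/-- A popular matching: no other matching is more popular. -/
def IsPopular {W : Type u} (G : SimpleGraph W) (pref : W → W → ℕ) (M : Set (Sym2 W)) : Prop :=
  IsMatching G M ∧
    ∀ M' : Set (Sym2 W), IsMatching G M' → vote G pref M' M ≤ vote G pref M M'

/-- Each vertex has a strict preference list: `pref v` is a bijection from the
neighborhood of `v` onto `{1, …, |N(v)|}`. -/
def HasPref {W : Type u} (G : SimpleGraph W) (pref : W → W → ℕ) : Prop :=
  ∀ v : W, Set.BijOn (pref v) (G.neighborSet v) (Set.Icc 1 (G.neighborSet v).ncard)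

/-- The edge `e ∉ M` is labeled `+2` by `label_M` (given rank function `rk`):
both endpoints prefer each other over their status in `M`. -/
def EdgePlus {W : Type u} (pref : W → W → ℕ) (rk : W → ℕ) (e : Sym2 W) : Prop :=
  ∃ x y : W, e = s(x, y) ∧ pref x y < rk x ∧ pref y x < rk y

/-- The edge `e ∉ M` is labeled `-2` by `label_M` (given rank function `rk`):
both endpoints prefer their status in `M` over each other. -/
def EdgeMinus {W : Type u} (pref : W → W → ℕ) (rk : W → ℕ) (e : Sym2 W) : Prop :=
  ∃ x y : W, e = s(x, y) ∧ rk x < pref x y ∧ rk y < pref y x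

/-- The graph `G_M`: the spanning subgraph of `G` consisting of the edges of `M`
together with the edges not labeled `-2`. -/
def GMgraph {W : Type u} (G : SimpleGraph W) (pref : W → W → ℕ) (M : Set (Sym2 W)) :
    SimpleGraph W where
  Adj x y := G.Adj x y ∧ (s(x, y) ∈ M ∨ ¬ EdgeMinus pref (rank G pref M) s(x, y))
  symm := by
    constructor
    intro x y h
    refine ⟨h.1.symm, ?_⟩
    rw [Sym2.eq_swap]
    exact h.2
  loopless := ⟨fun x h => G.irrefl h.1⟩

/-- Consecutive edges alternate between `M` and non-`M`. -/
def altRel {W : Type u} (M : Set (Sym2 W)) (e e' : Sym2 W) : Prop := e ∈ M ↔ e' ∉ M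

/-- An alternating path (with respect to `M`) in a graph `G'`. -/
def IsAltPath {W : Type u} (M : Set (Sym2 W)) {G' : SimpleGraph W} {x y : W}
    (p : G'.Walk x y) : Prop :=
  p.IsPath ∧ List.Chain' (altRel M) p.edges ∧
    (∀ e, p.edges.head? = some e → e ∉ M → ¬ Matched M x) ∧
    (∀ e, p.edges.getLast? = some e → e ∉ M → ¬ Matched M y)

/-- An alternating cycle (with respect to `M`) in a graph `G'`:
the edges alternate cyclically between `M` and non-`M`. -/
def IsAltCycle {W : Type u} (M : Set (Sym2 W)) {G' : SimpleGraph W} {x : W}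
    (p : G'.Walk x x) : Prop :=
  p.IsCycle ∧ List.Chain' (altRel M) (p.edges ++ p.edges.take 1)

/-- `l` contains at least one edge labeled `+2`. -/
def OnePlusEdge {W : Type u} (pref : W → W → ℕ) (rk : W → ℕ) (l : List (Sym2 W)) : Prop :=
  ∃ e ∈ l, EdgePlus pref rk e

/-- `l` contains at least two edges labeled `+2`. -/
def TwoPlusEdges {W : Type u} (pref : W → W → ℕ) (rk : W → ℕ) (l : List (Sym2 W)) : Prop :=
  ∃ e ∈ l, ∃ e' ∈ l, e ≠ e' ∧ EdgePlus pref rk e ∧ EdgePlus pref rk e'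

/-- A vertex cover. -/
def IsVC {V : Type u} (G : SimpleGraph V) (U : Set V) : Prop :=
  ∀ ⦃x y : V⦄, G.Adj x y → x ∈ U ∨ y ∈ U
/-- An instance of Partitioned Vertex Cover: `G` is a finite simple graph, `P` is a
collection of pairwise disjoint edges of `G`, `T` is a collection of pairwise disjoint
3-element vertex sets each inducing a triangle in `G`, and every vertex of `G` lies in
exactly one member of `P ∪ T`. -/
def IsPVC {V : Type u} (G : SimpleGraph V) (P : Set (Sym2 V)) (T : Set (Finset V)) : Prop :=
  Finite V ∧
  P ⊆ G.edgeSet ∧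
  (∀ e ∈ P, ∀ e' ∈ P, e ≠ e' → ∀ v : V, v ∈ e → v ∉ e') ∧
  (∀ t ∈ T, t.card = 3) ∧
  (∀ t ∈ T, ∀ x ∈ t, ∀ y ∈ t, x ≠ y → G.Adj x y) ∧
  (∀ t ∈ T, ∀ t' ∈ T, t ≠ t' → ∀ v : V, v ∈ t → v ∉ t') ∧
  (∀ v : V, (∃ e ∈ P, v ∈ e) ∨ (∃ t ∈ T, v ∈ t)) ∧
  (∀ v : V, ¬ ((∃ e ∈ P, v ∈ e) ∧ (∃ t ∈ T, v ∈ t)))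

/-- A solution of a Partitioned Vertex Cover instance: a vertex cover `U` with
`|U ∩ P| = 1` for every pair `P` and `|U ∩ T| = 2` for every triple `T`. -/
def IsPVCSolution {V : Type u} (G : SimpleGraph V) (P : Set (Sym2 V)) (T : Set (Finset V))
    (U : Set V) : Prop :=
  IsVC G U ∧
  (∀ e ∈ P, {x : V | x ∈ e ∧ x ∈ U}.ncard = 1) ∧
  (∀ t ∈ T, {x : V | x ∈ t ∧ x ∈ U}.ncard = 2)

/-- The vertices of the graph `H` built from a Partitioned Vertex Cover instance:
`a i`, `b i`, `c i`, `d i` for a vertex `i` of `G`; `u i j` is the vertex `u^e_i` for the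
edge `e = {i,j}` of `G`; `f i j` is the vertex `f_{ij}` for the pair `{i,j} ∈ P`. -/
inductive Gad (V : Type u) : Type u where
  | a : V → Gad V
  | b : V → Gad V
  | c : V → Gad V
  | d : V → Gad V
  | u : V → V → Gad V
  | f : V → V → Gad V
deriving DecidableEq

/-- Which formal gadget vertices are really vertices of `H`. -/
def Gad.valid {V : Type u} (G : SimpleGraph V) (P : Set (Sym2 V)) : Gad V → Prop
  | .u i j => G.Adj i j
  | .f i j => s(i, j) ∈ P
  | _ => True

/-- The edges of `H`, up to symmetry. -/
inductive HBase {V : Type u} (G : SimpleGraph V) (P : Set (Sym2 V)) (T : Set (Finset V)) :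
    Gad V → Gad V → Prop where
  | da (i : V) : HBase G P T (.d i) (.a i)
  | ab (i : V) : HBase G P T (.a i) (.b i)
  | ac (i : V) : HBase G P T (.a i) (.c i)
  | bc (i : V) : HBase G P T (.b i) (.c i)
  | uu {i j : V} (h : G.Adj i j) : HBase G P T (.u i j) (.u j i)
  | bu {i j : V} (h : G.Adj i j) : HBase G P T (.b i) (.u i j)
  | df {i j : V} (h : s(i, j) ∈ P) : HBase G P T (.d i) (.f i j)
  | fc {i j : V} (h : s(i, j) ∈ P) : HBase G P T (.f i j) (.c j)
  | cd {i j : V} (h : s(i, j) ∈ P) : HBase G P T (.c i) (.d j)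
  | dd {i j : V} {t : Finset V} (ht : t ∈ T) (hi : i ∈ t) (hj : j ∈ t) (hne : i ≠ j) :
      HBase G P T (.d i) (.d j)
  | cc {i j : V} {t : Finset V} (ht : t ∈ T) (hi : i ∈ t) (hj : j ∈ t) (hne : i ≠ j) :
      HBase G P T (.c i) (.c j)

/-- The graph `H` of the Popular Matching instance built from `(G, P, T)`. -/
def Hgraph {V : Type u} (G : SimpleGraph V) (P : Set (Sym2 V)) (T : Set (Finset V)) :
    SimpleGraph {g : Gad V // Gad.valid G P g} where
  Adj x y := x ≠ y ∧ (HBase G P T x.1 y.1 ∨ HBase G P T y.1 x.1)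
  symm := ⟨fun _ _ h => ⟨h.1.symm, h.2.symm⟩⟩
  loopless := ⟨fun _ h => h.1 rfl⟩

/-- The Popular Matching instance (graph together with preference lists) constructed
from a Partitioned Vertex Cover instance `(G, P, T)`.  The field `pref` gives the
preference lists; all its values on the neighborhoods in `H` are pinned down, except
the ranks that `b i` assigns to the vertices `u^e_i`, which form an arbitrary fixed
bijection onto `{2, …, deg_G(i) + 1}`. -/
structure Reduction (V : Type u) [LinearOrder V] : Type u where
  G : SimpleGraph V
  P : Set (Sym2 V)
  T : Set (Finset V)
  ispvc : IsPVC G P T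
  pref : Gad V → Gad V → ℕ
  pref_ab : ∀ i : V, pref (.a i) (.b i) = 1
  pref_ac : ∀ i : V, pref (.a i) (.c i) = 2
  pref_ad : ∀ i : V, pref (.a i) (.d i) = 3
  pref_ba : ∀ i : V, pref (.b i) (.a i) = 1
  pref_bu : ∀ i : V, Set.BijOn (pref (.b i)) {g : Gad V | ∃ j : V, G.Adj i j ∧ g = .u i j}
      (Set.Icc 2 ((G.neighborSet i).ncard + 1))
  pref_bc : ∀ i : V, pref (.b i) (.c i) = (G.neighborSet i).ncard + 2
  pref_ca : ∀ i : V, pref (.c i) (.a i) = 1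
  pref_cb : ∀ i : V, pref (.c i) (.b i) = 2
  pref_da : ∀ i : V, pref (.d i) (.a i) = 1
  pref_uu : ∀ i j : V, G.Adj i j → pref (.u i j) (.u j i) = 1
  pref_ub : ∀ i j : V, G.Adj i j → pref (.u i j) (.b i) = 2
  pref_cf : ∀ i j : V, s(i, j) ∈ P → pref (.c i) (.f j i) = 3
  pref_cd : ∀ i j : V, s(i, j) ∈ P → pref (.c i) (.d j) = 4
  pref_dc : ∀ i j : V, s(i, j) ∈ P → pref (.d i) (.c j) = 2
  pref_df : ∀ i j : V, s(i, j) ∈ P → pref (.d i) (.f i j) = 3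
  pref_fd : ∀ i j : V, s(i, j) ∈ P → pref (.f i j) (.d i) = 1
  pref_fc : ∀ i j : V, s(i, j) ∈ P → pref (.f i j) (.c j) = 2
  pref_tri : ∀ t ∈ T, ∀ i j k : V, t = {i, j, k} → i < j → j < k →
    pref (.c i) (.c k) = 3 ∧ pref (.c i) (.c j) = 4 ∧
    pref (.c j) (.c i) = 3 ∧ pref (.c j) (.c k) = 4 ∧
    pref (.c k) (.c j) = 3 ∧ pref (.c k) (.c i) = 4 ∧
    pref (.d i) (.d j) = 2 ∧ pref (.d i) (.d k) = 3 ∧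
    pref (.d j) (.d k) = 2 ∧ pref (.d j) (.d i) = 3 ∧
    pref (.d k) (.d i) = 2 ∧ pref (.d k) (.d j) = 3

namespace Reduction

variable {V : Type u} [LinearOrder V] (R : Reduction V)

/-- The vertex set of `H`. -/
abbrev HV : Type u := {g : Gad V // Gad.valid R.G R.P g}

/-- The graph `H`. -/
def H : SimpleGraph R.HV := Hgraph R.G R.P R.T

/-- The preference lists of `H`, as a function on its vertices. -/
def prefH : R.HV → R.HV → ℕ := fun x y => R.pref x.1 y.1

/-- The vertex `a_i` of `H`. -/
def va (i : V) : R.HV := ⟨.a i, trivial⟩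
/-- The vertex `b_i` of `H`. -/
def vb (i : V) : R.HV := ⟨.b i, trivial⟩
/-- The vertex `c_i` of `H`. -/
def vc (i : V) : R.HV := ⟨.c i, trivial⟩
/-- The vertex `d_i` of `H`. -/
def vd (i : V) : R.HV := ⟨.d i, trivial⟩
/-- The vertex `u^e_i` of `H`, for an edge `e = {i,j}` of `G`. -/
def vu (i j : V) (h : R.G.Adj i j) : R.HV := ⟨.u i j, h⟩
/-- The vertex `f_{ij}` of `H`, for a pair `{i,j} ∈ P`. -/
def vf (i j : V) (h : s(i, j) ∈ R.P) : R.HV := ⟨.f i j, h⟩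

/-- The matching `M*` in `H` constructed from a solution `U`. -/
def Mstar (U : Set V) : Set (Sym2 R.HV) :=
  {e : Sym2 R.HV |
    (∃ (i j : V) (h : R.G.Adj i j), e = s(R.vu i j h, R.vu j i h.symm)) ∨
    (∃ (x y : V) (h : s(x, y) ∈ R.P) (h' : s(y, x) ∈ R.P), x ∉ U ∧ y ∈ U ∧
      (e = s(R.va x, R.vd x) ∨ e = s(R.vb x, R.vc x) ∨ e = s(R.va y, R.vb y) ∨
       e = s(R.vf x y h, R.vc y) ∨ e = s(R.vf y x h', R.vd y))) ∨
    (∃ t ∈ R.T, ∃ x y z : V, t = {x, y, z} ∧ x ∉ U ∧ y ∈ U ∧ z ∈ U ∧ y ≠ z ∧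
      R.pref (.d x) (.d y) < R.pref (.d x) (.d z) ∧
      (e = s(R.va x, R.vd x) ∨ e = s(R.vb x, R.vc x) ∨ e = s(R.va y, R.vb y) ∨
       e = s(R.va z, R.vb z) ∨ e = s(R.vc y, R.vc z) ∨ e = s(R.vd y, R.vd z)))}

end Reduction

/-- The vertex set of the Pair Selector gadget associated with a pair `{i,j}`. -/
def pairGadget {V : Type u} (i j : V) : Set (Gad V) :=
  {g : Gad V | ∃ x : V, (x = i ∨ x = j) ∧ (g = .a x ∨ g = .b x ∨ g = .c x ∨ g = .d x)} ∪
    {Gad.f i j, Gad.f j i}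

/-- The vertex set of the Triple Selector gadget associated with a triple `t`. -/
def tripleGadget {V : Type u} (t : Finset V) : Set (Gad V) :=
  {g : Gad V | ∃ x ∈ t, g = .a x ∨ g = .b x ∨ g = .c x ∨ g = .d x}


section AuxMatching

variable {W : Type u}

lemma matching_partner_unique {G : SimpleGraph W} {M : Set (Sym2 W)}
    (hM : IsMatching G M) {v w w' : W} (h : s(v, w) ∈ M) (h' : s(v, w') ∈ M) :
    w = w' := by
  by_cases he : s(v, w) = s(v, w')
  · rw [Sym2.eq_iff] at he
    rcases he with ⟨-, h2⟩ | ⟨h1, h2⟩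
    · exact h2
    · exact h2.trans h1
  · exact absurd (Sym2.mem_mk_left v w') (hM.2 _ h _ h' he v (Sym2.mem_mk_left v w))

lemma rank_eq {G : SimpleGraph W} {pref : W → W → ℕ} {M : Set (Sym2 W)}
    (hM : IsMatching G M) {v w : W} (h : s(v, w) ∈ M) :
    rank G pref M v = pref v w := by
  have hex : ∃ x : W, s(v, x) ∈ M := ⟨w, h⟩
  unfold rank
  rw [dif_pos hex]
  exact congrArg (pref v) (matching_partner_unique hM hex.choose_spec h)

lemma rank_unmatched {G : SimpleGraph W} {pref : W → W → ℕ} {M : Set (Sym2 W)}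
    {v : W} (h : ¬ Matched M v) :
    rank G pref M v = (G.neighborSet v).ncard + 1 := by
  unfold rank
  exact dif_neg h

/-- Modify a matching: delete all edges touching `S`, add the edges of `N`. -/
def modM (M : Set (Sym2 W)) (S : Set W) (N : Set (Sym2 W)) : Set (Sym2 W) :=
  {e ∈ M | ∀ v ∈ e, v ∉ S} ∪ N

lemma modM_isMatching {G : SimpleGraph W} {M : Set (Sym2 W)} {S : Set W}
    {N : Set (Sym2 W)} (hM : IsMatching G M) (hN : N ⊆ G.edgeSet)
    (hNd : ∀ e ∈ N, ∀ e' ∈ N, e ≠ e' → ∀ v : W, v ∈ e → v ∉ e')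
    (hNS : ∀ e ∈ N, ∀ v ∈ e, v ∈ S) : IsMatching G (modM M S N) := by
  constructor
  · rintro e (⟨he, -⟩ | he)
    · exact hM.1 he
    · exact hN he
  · rintro e (⟨he, heS⟩ | he) e' (⟨he', he'S⟩ | he') hne v hv
    · exact hM.2 _ he _ he' hne v hv
    · exact fun hv' => heS v hv (hNS _ he' v hv')
    · exact fun hv' => he'S v hv' (hNS _ he v hv)
    · exact hNd _ he _ he' hne v hv

lemma rank_modM_eq {G : SimpleGraph W} {pref : W → W → ℕ} {M : Set (Sym2 W)}
    {S : Set W} {N : Set (Sym2 W)} (hM : IsMatching G M)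
    (hM' : IsMatching G (modM M S N)) (hNS : ∀ e ∈ N, ∀ v ∈ e, v ∈ S)
    {v : W} (hv : v ∉ S) (hp : ∀ w : W, s(v, w) ∈ M → w ∉ S) :
    rank G pref (modM M S N) v = rank G pref M v := by
  by_cases hm : ∃ w : W, s(v, w) ∈ M
  · obtain ⟨w, hw⟩ := hm
    have hw' : s(v, w) ∈ modM M S N := by
      refine Or.inl ⟨hw, ?_⟩
      intro x hx
      rcases Sym2.mem_iff.mp hx with rfl | rfl
      · exact hv
      · exact hp _ hw
    rw [rank_eq hM' hw', rank_eq hM hw]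
  · have hm' : ¬ Matched (modM M S N) v := by
      rintro ⟨w, (⟨hw, -⟩ | hw)⟩
      · exact hm ⟨w, hw⟩
      · exact hv (hNS _ hw v (Sym2.mem_mk_left v w))
    rw [rank_unmatched hm', rank_unmatched hm]

/-- A popularity contradiction from a mutual-improvement edge with one
unmatched endpoint. -/
lemma pop_one_edge [Finite W] {G : SimpleGraph W} {pref : W → W → ℕ}
    {M : Set (Sym2 W)} (hM : IsPopular G pref M) {x y : W} (hadj : G.Adj x y)
    (hx : pref x y < rank G pref M x) (hy : pref y x < rank G pref M y)
    (hux : ¬ Matched M x) : False := by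
  classical
  set S : Set W := {x, y} with hS
  set N : Set (Sym2 W) := {s(x, y)} with hN
  have hNS : ∀ e ∈ N, ∀ v ∈ e, v ∈ S := by
    intro e he v hv
    rw [hN, Set.mem_singleton_iff] at he
    subst he
    rcases Sym2.mem_iff.mp hv with rfl | rfl
    · exact Or.inl rfl
    · exact Or.inr rfl
  have hM' : IsMatching G (modM M S N) := by
    refine modM_isMatching hM.1 ?_ ?_ hNS
    · intro e he
      rw [hN, Set.mem_singleton_iff] at he
      subst he
      exact G.mem_edgeSet.mpr hadj
    · intro e he e' he' hne
      rw [hN, Set.mem_singleton_iff] at he he'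
      exact absurd (he.trans he'.symm) hne
  have hxy' : s(x, y) ∈ modM M S N := Or.inr rfl
  have hyx' : s(y, x) ∈ modM M S N := by rw [Sym2.eq_swap]; exact hxy'
  have hwinx : rank G pref (modM M S N) x < rank G pref M x := by
    rw [rank_eq hM' hxy']; exact hx
  have hwiny : rank G pref (modM M S N) y < rank G pref M y := by
    rw [rank_eq hM' hyx']; exact hy
  obtain ⟨w, hw⟩ : ∃ w : W, ¬ Matched M y ∨ s(y, w) ∈ M := by
    by_cases h : Matched M y
    · obtain ⟨w, hw⟩ := h; exact ⟨w, Or.inr hw⟩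
    · exact ⟨x, Or.inl h⟩
  have hsub : {v : W | rank G pref M v < rank G pref (modM M S N) v} ⊆ {w} := by
    intro v hv
    simp only [Set.mem_setOf_eq] at hv
    by_contra hvw
    have hvS : v ∉ S := by
      intro hvs
      rcases hvs with rfl | hvs
      · exact absurd hv (not_lt.mpr hwinx.le)
      · rw [Set.mem_singleton_iff] at hvs
        subst hvs
        exact absurd hv (not_lt.mpr hwiny.le)
    have hvp : ∀ q : W, s(v, q) ∈ M → q ∉ S := by
      rintro q hq (rfl | hqS)
      · exact hux ⟨v, by rw [Sym2.eq_swap]; exact hq⟩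
      · rw [Set.mem_singleton_iff] at hqS
        subst hqS
        rcases hw with hw | hw
        · exact hw ⟨v, by rw [Sym2.eq_swap]; exact hq⟩
        · exact hvw (Set.mem_singleton_iff.mpr
            (matching_partner_unique hM.1 (by rw [Sym2.eq_swap]; exact hq) hw))
    rw [rank_modM_eq hM.1 hM' hNS hvS hvp] at hv
    exact lt_irrefl _ hv
  have h2 : ({x, y} : Set W) ⊆
      {v : W | rank G pref (modM M S N) v < rank G pref M v} := by
    rintro v (rfl | hv)
    · exact hwinx
    · rw [Set.mem_singleton_iff] at hv; subst hv; exact hwiny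
  have hv1 : 2 ≤ vote G pref (modM M S N) M := by
    have h3 := Set.ncard_le_ncard h2 (Set.toFinite _)
    rwa [Set.ncard_pair hadj.ne] at h3
  have hv2 : vote G pref M (modM M S N) ≤ 1 := by
    have h3 := Set.ncard_le_ncard hsub (Set.toFinite _)
    rw [Set.ncard_singleton] at h3
    exact h3
  have := hM.2 _ hM'
  omega


/-- A popularity contradiction from an augmenting path of length 5
`p — x — y — z — z'` where `x–y` and `z–z'` are mutual improvements. -/
lemma pop_two_edges [Finite W] {G : SimpleGraph W} {pref : W → W → ℕ}
    {M : Set (Sym2 W)} (hM : IsPopular G pref M) {x y z z' p : W}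
    (hadj : G.Adj x y) (hadj2 : G.Adj z z')
    (hxz : x ≠ z) (hxz' : x ≠ z') (hyz : y ≠ z) (hyz' : y ≠ z')
    (hxp : s(x, p) ∈ M) (hyzM : s(y, z) ∈ M)
    (h1 : pref x y < pref x p)
    (h2 : pref y x < pref y z)
    (h3 : pref z z' < pref z y)
    (h4 : pref z' z < rank G pref M z') : False := by
  classical
  set S : Set W := {x, y, z, z'} with hS
  set N : Set (Sym2 W) := {s(x, y), s(z, z')} with hN
  have hmemN : ∀ e ∈ N, e = s(x, y) ∨ e = s(z, z') := by
    rintro e (rfl | he)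
    · exact Or.inl rfl
    · rw [Set.mem_singleton_iff] at he; exact Or.inr he
  have hNS : ∀ e ∈ N, ∀ v ∈ e, v ∈ S := by
    intro e he v hv
    rcases hmemN e he with rfl | rfl <;> rcases Sym2.mem_iff.mp hv with rfl | rfl <;>
      simp [hS]
  have hM' : IsMatching G (modM M S N) := by
    refine modM_isMatching hM.1 ?_ ?_ hNS
    · intro e he
      rcases hmemN e he with rfl | rfl
      · exact G.mem_edgeSet.mpr hadj
      · exact G.mem_edgeSet.mpr hadj2
    · intro e he e' he' hne v hv hv'
      rcases hmemN e he with rfl | rfl <;> rcases hmemN e' he' with rfl | rfl <;>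
        [skip; skip; skip; skip] <;>
      first
      | exact hne rfl
      | (rcases Sym2.mem_iff.mp hv with rfl | rfl <;>
          rcases Sym2.mem_iff.mp hv' with h5 | h5 <;>
          first
          | exact hxz h5
          | exact hxz' h5
          | exact hyz h5
          | exact hyz' h5
          | exact hxz h5.symm
          | exact hxz' h5.symm
          | exact hyz h5.symm
          | exact hyz' h5.symm)
  have hxy' : s(x, y) ∈ modM M S N := Or.inr (Or.inl rfl)
  have hzz' : s(z, z') ∈ modM M S N := Or.inr (Or.inr rfl)
  have hyx' : s(y, x) ∈ modM M S N := by rw [Sym2.eq_swap]; exact hxy'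
  have hz'z : s(z', z) ∈ modM M S N := by rw [Sym2.eq_swap]; exact hzz'
  have hzyM : s(z, y) ∈ M := by rw [Sym2.eq_swap]; exact hyzM
  have hwinx : rank G pref (modM M S N) x < rank G pref M x := by
    rw [rank_eq hM' hxy', rank_eq hM.1 hxp]; exact h1
  have hwiny : rank G pref (modM M S N) y < rank G pref M y := by
    rw [rank_eq hM' hyx', rank_eq hM.1 hyzM]; exact h2
  have hwinz : rank G pref (modM M S N) z < rank G pref M z := by
    rw [rank_eq hM' hzz', rank_eq hM.1 hzyM]; exact h3
  have hwinz' : rank G pref (modM M S N) z' < rank G pref M z' := by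
    rw [rank_eq hM' hz'z]; exact h4
  obtain ⟨w, hw⟩ : ∃ w : W, ¬ Matched M z' ∨ s(z', w) ∈ M := by
    by_cases h : Matched M z'
    · obtain ⟨w, hw⟩ := h; exact ⟨w, Or.inr hw⟩
    · exact ⟨x, Or.inl h⟩
  have hsub : {v : W | rank G pref M v < rank G pref (modM M S N) v} ⊆ {p, w} := by
    intro v hv
    simp only [Set.mem_setOf_eq] at hv
    by_contra hvw
    simp only [Set.mem_insert_iff, Set.mem_singleton_iff, not_or] at hvw
    have hvS : v ∉ S := by
      intro hvs
      rcases hvs with rfl | rfl | rfl | hvs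
      · exact absurd hv (not_lt.mpr hwinx.le)
      · exact absurd hv (not_lt.mpr hwiny.le)
      · exact absurd hv (not_lt.mpr hwinz.le)
      · rw [Set.mem_singleton_iff] at hvs
        subst hvs
        exact absurd hv (not_lt.mpr hwinz'.le)
    have hvp : ∀ q : W, s(v, q) ∈ M → q ∉ S := by
      rintro q hq (rfl | rfl | rfl | hqS)
      · exact hvw.1 (matching_partner_unique hM.1
          (by rw [Sym2.eq_swap]; exact hq) hxp)
      · exact hvS (by
          have : v = z := matching_partner_unique hM.1
            (by rw [Sym2.eq_swap]; exact hq) hyzM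
          rw [hS, this]
          exact Or.inr (Or.inr (Or.inl rfl)))
      · exact hvS (by
          have : v = y := matching_partner_unique hM.1
            (by rw [Sym2.eq_swap]; exact hq) hzyM
          rw [hS, this]
          exact Or.inr (Or.inl rfl))
      · rw [Set.mem_singleton_iff] at hqS
        subst hqS
        rcases hw with hw | hw
        · exact hw ⟨v, by rw [Sym2.eq_swap]; exact hq⟩
        · exact hvw.2 (matching_partner_unique hM.1
            (by rw [Sym2.eq_swap]; exact hq) hw)
    rw [rank_modM_eq hM.1 hM' hNS hvS hvp] at hv
    exact lt_irrefl _ hv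
  have h2' : ({x, y, z, z'} : Set W) ⊆
      {v : W | rank G pref (modM M S N) v < rank G pref M v} := by
    rintro v (rfl | rfl | rfl | hv)
    · exact hwinx
    · exact hwiny
    · exact hwinz
    · rw [Set.mem_singleton_iff] at hv; subst hv; exact hwinz'
  have hcard : ({x, y, z, z'} : Set W).ncard = 4 := by
    rw [Set.ncard_insert_of_notMem (by simp [hadj.ne, hxz, hxz']),
      Set.ncard_insert_of_notMem (by simp [hyz, hyz']),
      Set.ncard_insert_of_notMem (by simp [hadj2.ne]),
      Set.ncard_singleton]
  have hv1 : 4 ≤ vote G pref (modM M S N) M := by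
    have h3' := Set.ncard_le_ncard h2' (Set.toFinite _)
    rwa [hcard] at h3'
  have hv2 : vote G pref M (modM M S N) ≤ 2 := by
    have h3' := Set.ncard_le_ncard hsub (Set.toFinite _)
    have h4' := Set.ncard_insert_le p ({w} : Set W)
    have h5' : ({w} : Set W).ncard = 1 := Set.ncard_singleton w
    calc vote G pref M (modM M S N) ≤ ({p, w} : Set W).ncard := h3'
      _ ≤ ({w} : Set W).ncard + 1 := h4'
      _ ≤ 2 := by omega
  have := hM.2 _ hM'
  omega

end AuxMatching


section Nbrs

variable {V : Type u} {G : SimpleGraph V} {P : Set (Sym2 V)} {T : Set (Finset V)}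

lemma nbr_a {i : V} {g : Gad V}
    (h : HBase G P T (Gad.a i) g ∨ HBase G P T g (Gad.a i)) :
    g = Gad.b i ∨ g = Gad.c i ∨ g = Gad.d i := by
  rcases h with h | h <;> cases h <;> simp

lemma nbr_b {i : V} {g : Gad V}
    (h : HBase G P T (Gad.b i) g ∨ HBase G P T g (Gad.b i)) :
    g = Gad.a i ∨ g = Gad.c i ∨ ∃ j : V, G.Adj i j ∧ g = Gad.u i j := by
  rcases h with h | h <;> cases h <;> simp_all

lemma nbr_u {i j : V} {g : Gad V}
    (h : HBase G P T (Gad.u i j) g ∨ HBase G P T g (Gad.u i j)) :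
    g = Gad.u j i ∨ g = Gad.b i := by
  rcases h with h | h <;> cases h <;> simp

end Nbrs

lemma gad_finite {V : Type u} [Finite V] : Finite (Gad V) := by
  let f : Gad V → (V ⊕ V ⊕ V ⊕ V ⊕ (V × V) ⊕ (V × V)) := fun g =>
    match g with
    | .a i => Sum.inl i
    | .b i => Sum.inr (Sum.inl i)
    | .c i => Sum.inr (Sum.inr (Sum.inl i))
    | .d i => Sum.inr (Sum.inr (Sum.inr (Sum.inl i)))
    | .u i j => Sum.inr (Sum.inr (Sum.inr (Sum.inr (Sum.inl (i, j)))))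
    | .f i j => Sum.inr (Sum.inr (Sum.inr (Sum.inr (Sum.inr (i, j)))))
  exact Finite.of_injective f (by
    intro g g' h
    cases g <;> cases g' <;> simp_all [f])

/-- In a popular matching `M` in `H`, for every vertex `i` of `G`, either
`{a_i, b_i} ∈ M`, or both `{a_i, d_i} ∈ M` and `{b_i, c_i} ∈ M`. -/
theorem popular_configuration {V : Type u} [LinearOrder V] (R : Reduction V)
    (M : Set (Sym2 R.HV)) (hM : IsPopular R.H R.prefH M) :
    ∀ i : V, s(R.va i, R.vb i) ∈ M ∨
      (s(R.va i, R.vd i) ∈ M ∧ s(R.vb i, R.vc i) ∈ M) := by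
  haveI : Finite V := R.ispvc.1
  haveI : Finite (Gad V) := gad_finite
  haveI : Finite R.HV := Subtype.finite
  intro i
  have hmat : IsMatching R.H M := hM.1
  have adj_of_mem : ∀ {x y : R.HV}, s(x, y) ∈ M → R.H.Adj x y :=
    fun h => R.H.mem_edgeSet.mp (hmat.1 h)
  have adj_ab : R.H.Adj (R.va i) (R.vb i) := by
    change _ ∧ _
    refine ⟨?_, Or.inl (HBase.ab i)⟩
    intro h
    simpa [Reduction.va, Reduction.vb] using congrArg Subtype.val h
  have rk_un : ∀ (v x : R.HV), R.H.Adj v x → ¬ Matched M v →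
      2 ≤ rank R.H R.prefH M v := by
    intro v x hadj hun
    rw [rank_unmatched hun]
    have h0 : 0 < (R.H.neighborSet v).ncard := (Set.ncard_pos (Set.toFinite _)).mpr ⟨x, hadj⟩
    omega
  have rk_b : ∀ w : R.HV, s(R.vb i, w) ∈ M → w ≠ R.va i →
      2 ≤ R.prefH (R.vb i) w := by
    intro w hw hne
    have hadj := adj_of_mem hw
    rcases nbr_b (show _ ∧ _ from hadj).2 with h | h | ⟨j, hij, h⟩
    · exact absurd (Subtype.ext h) hne
    · rw [show w = R.vc i from Subtype.ext h]
      have e1 : R.prefH (R.vb i) (R.vc i) = (R.G.neighborSet i).ncard + 2 :=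
        R.pref_bc i
      omega
    · rw [show w = R.vu i j hij from Subtype.ext h]
      have hmem : (Gad.u i j : Gad V) ∈
          {g : Gad V | ∃ j' : V, R.G.Adj i j' ∧ g = .u i j'} := ⟨j, hij, rfl⟩
      exact ((R.pref_bu i).1 hmem).1
  have rk_b_gt1 : ¬ Matched M (R.va i) →
      R.prefH (R.vb i) (R.va i) < rank R.H R.prefH M (R.vb i) := by
    intro hua
    have e1 : R.prefH (R.vb i) (R.va i) = 1 := R.pref_ba i
    by_cases hb : Matched M (R.vb i)
    · obtain ⟨w, hw⟩ := hb
      have hwa : w ≠ R.va i := by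
        rintro rfl
        exact hua ⟨R.vb i, by rw [Sym2.eq_swap]; exact hw⟩
      have h2 := rk_b w hw hwa
      rw [rank_eq hmat hw]
      omega
    · have := rk_un _ _ adj_ab.symm hb
      omega
  have contra_u : ∀ pa : R.HV, s(R.va i, pa) ∈ M →
      R.prefH (R.va i) (R.vb i) < R.prefH (R.va i) pa →
      ∀ (j : V) (hij : R.G.Adj i j), s(R.vb i, R.vu i j hij) ∈ M → False := by
    intro pa hpa hlt j hij hbu
    have hadjuu : R.H.Adj (R.vu i j hij) (R.vu j i hij.symm) := by
      change _ ∧ _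
      refine ⟨?_, Or.inl (HBase.uu hij)⟩
      intro h
      have h2 := congrArg Subtype.val h
      simp only [Reduction.vu, Gad.u.injEq] at h2
      exact hij.ne h2.1
    have d1 : R.va i ≠ R.vu i j hij := by
      intro h; simpa [Reduction.va, Reduction.vu] using congrArg Subtype.val h
    have d2 : R.va i ≠ R.vu j i hij.symm := by
      intro h; simpa [Reduction.va, Reduction.vu] using congrArg Subtype.val h
    have d3 : R.vb i ≠ R.vu i j hij := by
      intro h; simpa [Reduction.vb, Reduction.vu] using congrArg Subtype.val h
    have d4 : R.vb i ≠ R.vu j i hij.symm := by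
      intro h; simpa [Reduction.vb, Reduction.vu] using congrArg Subtype.val h
    have h2' : R.prefH (R.vb i) (R.va i) < R.prefH (R.vb i) (R.vu i j hij) := by
      have e1 : R.prefH (R.vb i) (R.va i) = 1 := R.pref_ba i
      have e2 := rk_b _ hbu d1.symm
      omega
    have h3' : R.prefH (R.vu i j hij) (R.vu j i hij.symm) <
        R.prefH (R.vu i j hij) (R.vb i) := by
      have e1 : R.prefH (R.vu i j hij) (R.vu j i hij.symm) = 1 := R.pref_uu i j hij
      have e2 : R.prefH (R.vu i j hij) (R.vb i) = 2 := R.pref_ub i j hij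
      omega
    have hrk4 : R.prefH (R.vu j i hij.symm) (R.vu i j hij) <
        rank R.H R.prefH M (R.vu j i hij.symm) := by
      have e1 : R.prefH (R.vu j i hij.symm) (R.vu i j hij) = 1 :=
        R.pref_uu j i hij.symm
      by_cases hmu : Matched M (R.vu j i hij.symm)
      · obtain ⟨q, hq⟩ := hmu
        rcases nbr_u (show _ ∧ _ from adj_of_mem hq).2 with h' | h'
        · exfalso
          rw [show q = R.vu i j hij from Subtype.ext h'] at hq
          have hq1 : s(R.vu i j hij, R.vu j i hij.symm) ∈ M := by
            rw [Sym2.eq_swap]; exact hq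
          have hq2 : s(R.vu i j hij, R.vb i) ∈ M := by
            rw [Sym2.eq_swap]; exact hbu
          have h3 := matching_partner_unique hmat hq1 hq2
          simpa [Reduction.vu, Reduction.vb, Subtype.ext_iff] using h3
        · rw [show q = R.vb j from Subtype.ext h'] at hq
          rw [rank_eq hmat hq]
          have e2 : R.prefH (R.vu j i hij.symm) (R.vb j) = 2 :=
            R.pref_ub j i hij.symm
          omega
      · have := rk_un _ _ hadjuu.symm hmu
        omega
    exact pop_two_edges hM adj_ab hadjuu d1 d2 d3 d4 hpa hbu hlt h2' h3' hrk4
  by_cases hma : Matched M (R.va i)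
  · obtain ⟨pa, hpa⟩ := hma
    have hadja := adj_of_mem hpa
    rcases nbr_a (show _ ∧ _ from hadja).2 with h | h | h
    · rw [show pa = R.vb i from Subtype.ext h] at hpa
      exact Or.inl hpa
    · -- a_i is matched to c_i : contradiction
      exfalso
      rw [show pa = R.vc i from Subtype.ext h] at hpa
      by_cases hmb : Matched M (R.vb i)
      · obtain ⟨pb, hpb⟩ := hmb
        rcases nbr_b (show _ ∧ _ from adj_of_mem hpb).2 with h' | h' | ⟨j, hij, h'⟩
        · rw [show pb = R.va i from Subtype.ext h'] at hpb
          have h1 : s(R.va i, R.vb i) ∈ M := by rw [Sym2.eq_swap]; exact hpb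
          have h2 := matching_partner_unique hmat h1 hpa
          simpa [Reduction.vb, Reduction.vc, Subtype.ext_iff] using h2
        · rw [show pb = R.vc i from Subtype.ext h'] at hpb
          have h1 : s(R.vc i, R.vb i) ∈ M := by rw [Sym2.eq_swap]; exact hpb
          have h2 : s(R.vc i, R.va i) ∈ M := by rw [Sym2.eq_swap]; exact hpa
          have h3 := matching_partner_unique hmat h1 h2
          simpa [Reduction.va, Reduction.vb, Subtype.ext_iff] using h3
        · rw [show pb = R.vu i j hij from Subtype.ext h'] at hpb
          refine contra_u _ hpa ?_ j hij hpb
          have e1 : R.prefH (R.va i) (R.vb i) = 1 := R.pref_ab i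
          have e2 : R.prefH (R.va i) (R.vc i) = 2 := R.pref_ac i
          omega
      · refine pop_one_edge hM adj_ab.symm ?_ ?_ hmb
        · have e1 : R.prefH (R.vb i) (R.va i) = 1 := R.pref_ba i
          have := rk_un _ _ adj_ab.symm hmb
          omega
        · have e1 : R.prefH (R.va i) (R.vb i) = 1 := R.pref_ab i
          have e2 : R.prefH (R.va i) (R.vc i) = 2 := R.pref_ac i
          rw [rank_eq hmat hpa]
          omega
    · -- a_i is matched to d_i
      rw [show pa = R.vd i from Subtype.ext h] at hpa
      by_cases hmb : Matched M (R.vb i)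
      · obtain ⟨pb, hpb⟩ := hmb
        rcases nbr_b (show _ ∧ _ from adj_of_mem hpb).2 with h' | h' | ⟨j, hij, h'⟩
        · exfalso
          rw [show pb = R.va i from Subtype.ext h'] at hpb
          have h1 : s(R.va i, R.vb i) ∈ M := by rw [Sym2.eq_swap]; exact hpb
          have h2 := matching_partner_unique hmat h1 hpa
          simpa [Reduction.vb, Reduction.vd, Subtype.ext_iff] using h2
        · rw [show pb = R.vc i from Subtype.ext h'] at hpb
          exact Or.inr ⟨hpa, hpb⟩
        · exfalso
          rw [show pb = R.vu i j hij from Subtype.ext h'] at hpb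
          refine contra_u _ hpa ?_ j hij hpb
          have e1 : R.prefH (R.va i) (R.vb i) = 1 := R.pref_ab i
          have e2 : R.prefH (R.va i) (R.vd i) = 3 := R.pref_ad i
          omega
      · exfalso
        refine pop_one_edge hM adj_ab.symm ?_ ?_ hmb
        · have e1 : R.prefH (R.vb i) (R.va i) = 1 := R.pref_ba i
          have := rk_un _ _ adj_ab.symm hmb
          omega
        · have e1 : R.prefH (R.va i) (R.vb i) = 1 := R.pref_ab i
          have e2 : R.prefH (R.va i) (R.vd i) = 3 := R.pref_ad i
          rw [rank_eq hmat hpa]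
          omega
  · -- a_i unmatched : contradiction
    exfalso
    refine pop_one_edge hM adj_ab ?_ ?_ hma
    · have e1 : R.prefH (R.va i) (R.vb i) = 1 := R.pref_ab i
      have := rk_un _ _ adj_ab hma
      omega
    · exact rk_b_gt1 hma
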